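/- Let P be a finite ordered set, G ≤ Aut(P), D, E two G-orbits, (S,B) a primitive pair for the action on D, C a block of the action on E with C ▶^B S, and T a block of the action on E such that (C,T) is a primitive pair. Then T ▶^B S or S ▶^T C. -/

import Mathlib

open Pointwise

variable {P : Type*} [PartialOrder P]

/-- Two elements are comparable. -/
def Cmp (a b : P) : Prop := a ≤ b ∨ b ≤ a

/-- `A ◇ B`: `A` is made by `B`. -/
def MadeBy (A B : Set P) : Prop :=
  (∀ a ∈ A, ∀ b ∈ B, a < b) ∨ (∀ a ∈ A, ∀ b ∈ B, b < a)

/-- `A ∥ B`: no element of `A` is comparable to any element of `B`. -/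
def Incomp (A B : Set P) : Prop := ∀ a ∈ A, ∀ b ∈ B, ¬ Cmp a b

/-- `A` and `B` are nontrivially woven. -/
def Woven (A B : Set P) : Prop :=
  (∃ a ∈ A, ∃ b ∈ B, Cmp a b) ∧ (∃ a ∈ A, ∃ b ∈ B, ¬ Cmp a b)

/-- `(S₁, C')` and `(S₂, C')` have the same weaving type relative to `G`. -/
def SameWeave (G : Subgroup (Equiv.Perm P)) (S₁ S₂ C' : Set P) : Prop :=
  (MadeBy S₁ C' ↔ MadeBy S₂ C') ∧
  (Incomp S₁ C' ↔ Incomp S₂ C') ∧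
  (Woven S₁ C' → ∃ Φ ∈ G, Φ • S₁ = S₂ ∧ Φ • C' = C') ∧
  (Woven S₂ C' → ∃ Φ ∈ G, Φ • S₂ = S₁ ∧ Φ • C' = C')

/-- The conjugates of `S` contained in `B`, i.e. `B[Λ*(D)·S]`. -/
def blocksIn (G : Subgroup (Equiv.Perm P)) (S B : Set P) : Set (Set P) :=
  {S' | (∃ σ ∈ G, σ • S = S') ∧ S' ⊆ B}

/-- `(S, B)` is a primitive pair. -/
def PrimitivePair (G : Subgroup (Equiv.Perm P)) (S B : Set P) : Prop :=
  S ⊆ B ∧ S ≠ B ∧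
  (∀ S₁ ∈ blocksIn G S B, ∀ S₂ ∈ blocksIn G S B,
    ∃ σ ∈ G, σ • B = B ∧ σ • S₁ = S₂) ∧
  (∀ Q ⊆ blocksIn G S B,
    (∀ σ ∈ G, σ • B = B →
      (fun T => σ • T) '' Q = Q ∨ ((fun T => σ • T) '' Q) ∩ Q = ∅) →
    Q.Subsingleton ∨ Q = blocksIn G S B)

/-- `C ▶^B S`: the canonical `C`-partition of `B[G·S]` has more than one
nonempty part. -/
def ControlsVia (G : Subgroup (Equiv.Perm P)) (C B S : Set P) : Prop :=
  ∃ S₁ ∈ blocksIn G S B, ∃ S₂ ∈ blocksIn G S B, ¬ SameWeave G S₁ S₂ C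

section Helpers

variable {G : Subgroup (Equiv.Perm P)}

lemma le_smul_iff (hmono : ∀ σ ∈ G, ∀ a b : P, a ≤ b → σ a ≤ σ b)
    {σ : Equiv.Perm P} (hσ : σ ∈ G) {a b : P} : σ a ≤ σ b ↔ a ≤ b := by
  constructor
  · intro h
    have := hmono σ⁻¹ (inv_mem hσ) _ _ h
    simpa using this
  · exact hmono σ hσ a b

lemma lt_smul_iff (hmono : ∀ σ ∈ G, ∀ a b : P, a ≤ b → σ a ≤ σ b)
    {σ : Equiv.Perm P} (hσ : σ ∈ G) {a b : P} : σ a < σ b ↔ a < b := by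
  rw [lt_iff_le_and_ne, lt_iff_le_and_ne, le_smul_iff hmono hσ]
  simp

lemma cmp_smul_iff (hmono : ∀ σ ∈ G, ∀ a b : P, a ≤ b → σ a ≤ σ b)
    {σ : Equiv.Perm P} (hσ : σ ∈ G) {a b : P} : Cmp (σ a) (σ b) ↔ Cmp a b := by
  unfold Cmp
  rw [le_smul_iff hmono hσ, le_smul_iff hmono hσ]

lemma forall_smul {A : Set P} {σ : Equiv.Perm P} {p : P → Prop} :
    (∀ x ∈ σ • A, p x) ↔ ∀ x ∈ A, p (σ x) := by
  constructor
  · intro h x hx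
    have := h (σ • x) (Set.smul_mem_smul_set hx)
    simpa [Equiv.Perm.smul_def] using this
  · intro h x hx
    obtain ⟨y, hy, rfl⟩ := Set.mem_smul_set.mp hx
    simpa [Equiv.Perm.smul_def] using h y hy

lemma exists_smul {A : Set P} {σ : Equiv.Perm P} {p : P → Prop} :
    (∃ x ∈ σ • A, p x) ↔ ∃ x ∈ A, p (σ x) := by
  constructor
  · rintro ⟨x, hx, hp⟩
    obtain ⟨y, hy, rfl⟩ := Set.mem_smul_set.mp hx
    exact ⟨y, hy, by simpa [Equiv.Perm.smul_def] using hp⟩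
  · rintro ⟨x, hx, hp⟩
    exact ⟨σ • x, Set.smul_mem_smul_set hx, by simpa [Equiv.Perm.smul_def] using hp⟩

lemma madeBy_smul_iff (hmono : ∀ σ ∈ G, ∀ a b : P, a ≤ b → σ a ≤ σ b)
    {σ : Equiv.Perm P} (hσ : σ ∈ G) {A B : Set P} :
    MadeBy (σ • A) (σ • B) ↔ MadeBy A B := by
  simp only [MadeBy, forall_smul, lt_smul_iff hmono hσ]

lemma incomp_smul_iff (hmono : ∀ σ ∈ G, ∀ a b : P, a ≤ b → σ a ≤ σ b)
    {σ : Equiv.Perm P} (hσ : σ ∈ G) {A B : Set P} :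
    Incomp (σ • A) (σ • B) ↔ Incomp A B := by
  simp only [Incomp, forall_smul, cmp_smul_iff hmono hσ]

lemma woven_smul_iff (hmono : ∀ σ ∈ G, ∀ a b : P, a ≤ b → σ a ≤ σ b)
    {σ : Equiv.Perm P} (hσ : σ ∈ G) {A B : Set P} :
    Woven (σ • A) (σ • B) ↔ Woven A B := by
  simp only [Woven, exists_smul, cmp_smul_iff hmono hσ]

lemma madeBy_symm {A B : Set P} (h : MadeBy A B) : MadeBy B A :=
  h.elim (fun h => Or.inr fun b hb a ha => h a ha b hb)
    (fun h => Or.inl fun b hb a ha => h a ha b hb)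

lemma incomp_symm {A B : Set P} (h : Incomp A B) : Incomp B A :=
  fun b hb a ha hc => h a ha b hb (hc.elim Or.inr Or.inl)

lemma woven_symm {A B : Set P} (h : Woven A B) : Woven B A := by
  obtain ⟨⟨a, ha, b, hb, hc⟩, ⟨a', ha', b', hb', hc'⟩⟩ := h
  exact ⟨⟨b, hb, a, ha, hc.elim Or.inr Or.inl⟩,
    ⟨b', hb', a', ha', fun h => hc' (h.elim Or.inr Or.inl)⟩⟩

lemma madeBy_mono_right {A B C : Set P} (h : MadeBy A B) (hCB : C ⊆ B) : MadeBy A C :=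
  h.elim (fun h => Or.inl fun a ha c hc => h a ha c (hCB hc))
    (fun h => Or.inr fun a ha c hc => h a ha c (hCB hc))

lemma incomp_mono_right {A B C : Set P} (h : Incomp A B) (hCB : C ⊆ B) : Incomp A C :=
  fun a ha c hc => h a ha c (hCB hc)

lemma sameWeave_refl (G : Subgroup (Equiv.Perm P)) (X C' : Set P) : SameWeave G X X C' :=
  ⟨Iff.rfl, Iff.rfl, fun _ => ⟨1, one_mem G, one_smul _ _, one_smul _ _⟩,
   fun _ => ⟨1, one_mem G, one_smul _ _, one_smul _ _⟩⟩

lemma sameWeave_symm {X Y C' : Set P} (h : SameWeave G X Y C') : SameWeave G Y X C' :=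
  ⟨h.1.symm, h.2.1.symm, h.2.2.2, h.2.2.1⟩

lemma sameWeave_trans (hmono : ∀ σ ∈ G, ∀ a b : P, a ≤ b → σ a ≤ σ b)
    {X Y Z C' : Set P}
    (h : SameWeave G X Y C') (g : SameWeave G Y Z C') : SameWeave G X Z C' := by
  refine ⟨h.1.trans g.1, h.2.1.trans g.2.1, ?_, ?_⟩
  · intro hw
    obtain ⟨Φ, hΦ, hΦ1, hΦ2⟩ := h.2.2.1 hw
    have hwY : Woven Y C' := by
      rw [← hΦ1, ← hΦ2]
      exact (woven_smul_iff hmono hΦ).2 hw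
    obtain ⟨Ψ, hΨ, hΨ1, hΨ2⟩ := g.2.2.1 hwY
    exact ⟨Ψ * Φ, mul_mem hΨ hΦ, by rw [mul_smul, hΦ1, hΨ1], by rw [mul_smul, hΦ2, hΨ2]⟩
  · intro hw
    obtain ⟨Ψ, hΨ, hΨ1, hΨ2⟩ := g.2.2.2 hw
    have hwY : Woven Y C' := by
      rw [← hΨ1, ← hΨ2]
      exact (woven_smul_iff hmono hΨ).2 hw
    obtain ⟨Φ, hΦ, hΦ1, hΦ2⟩ := h.2.2.2 hwY
    exact ⟨Φ * Ψ, mul_mem hΦ hΨ, by rw [mul_smul, hΨ1, hΦ1], by rw [mul_smul, hΨ2, hΦ2]⟩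

lemma no_descent [Fintype P] (hmono : ∀ σ ∈ G, ∀ a b : P, a ≤ b → σ a ≤ σ b)
    {σ : Equiv.Perm P} (hσ : σ ∈ G) {x : P} (h : σ x < x) : False := by
  have step : ∀ n : ℕ, (σ ^ (n + 1)) x < (σ ^ n) x := by
    intro n
    have : (σ ^ n) (σ x) < (σ ^ n) x := (lt_smul_iff hmono (pow_mem hσ n)).2 h
    simpa [pow_succ, Equiv.Perm.mul_apply] using this
  have anti : StrictAnti fun n : ℕ => (σ ^ n) x := strictAnti_nat_of_succ_lt step
  obtain ⟨m, n, hmn, he⟩ := Finite.exists_ne_map_eq_of_infinite fun n : ℕ => (σ ^ n) x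
  exact hmn (anti.injective he)

lemma smul_block {C T : Set P} {σ : Equiv.Perm P} (hσ : σ ∈ G) (hσT : σ • T = T)
    {C' : Set P} (hC' : C' ∈ blocksIn G C T) : σ • C' ∈ blocksIn G C T := by
  obtain ⟨⟨ρ, hρ, hρC⟩, hsub⟩ := hC'
  exact ⟨⟨σ * ρ, mul_mem hσ hρ, by rw [mul_smul, hρC]⟩,
    by rw [← hσT]; exact Set.smul_set_mono hsub⟩

lemma cover_lemma {e : P} {E C T : Set P}
    (hE : E = {y | ∃ σ ∈ G, σ e = y}) (hCT : C ⊆ T) (hTE : T ⊆ E)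
    (hblockT : ∀ σ ∈ G, σ • T = T ∨ (σ • T) ∩ T = ∅)
    (hCne : C.Nonempty) : ∀ t ∈ T, ∃ C' ∈ blocksIn G C T, t ∈ C' := by
  intro t ht
  obtain ⟨c, hc⟩ := hCne
  have htE : t ∈ E := hTE ht
  have hcE : c ∈ E := hTE (hCT hc)
  rw [hE] at htE hcE
  obtain ⟨σt, hσtG, hσte⟩ := htE
  obtain ⟨σc, hσcG, hσce⟩ := hcE
  have hσG : σt * σc⁻¹ ∈ G := mul_mem hσtG (inv_mem hσcG)
  have hσc : (σt * σc⁻¹) c = t := by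
    rw [Equiv.Perm.mul_apply, ← hσce, Equiv.Perm.inv_def, Equiv.symm_apply_apply, hσte]
  have htσC : t ∈ (σt * σc⁻¹) • C := by
    rw [← hσc]
    exact Set.smul_mem_smul_set hc
  have hσT : (σt * σc⁻¹) • T = T := by
    rcases hblockT _ hσG with h | h
    · exact h
    · exfalso
      have : t ∈ ((σt * σc⁻¹) • T) ∩ T := ⟨Set.smul_set_mono hCT htσC, ht⟩
      rw [h] at this
      simpa using this
  exact ⟨(σt * σc⁻¹) • C, ⟨⟨σt * σc⁻¹, hσG, rfl⟩,
    by rw [← hσT]; exact Set.smul_set_mono hCT⟩, htσC⟩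

lemma madeBy_big [Fintype P] (hmono : ∀ σ ∈ G, ∀ a b : P, a ≤ b → σ a ≤ σ b)
    {C T X : Set P}
    (hCmem : C ∈ blocksIn G C T)
    (hcover : ∀ t ∈ T, ∃ C' ∈ blocksIn G C T, t ∈ C')
    (htrans : ∀ C₁ ∈ blocksIn G C T, ∀ C₂ ∈ blocksIn G C T,
      ∃ σ ∈ G, σ • T = T ∧ σ • C₁ = C₂)
    (hcomp : ∀ x ∈ X, ∀ t ∈ T, Cmp x t)
    (hmade : MadeBy X C) : MadeBy X T := by
  by_contra hn
  obtain ⟨hn1, hn2⟩ := not_or.mp hn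
  push_neg at hn1 hn2
  rcases hmade with hd | hd
  · obtain ⟨x₀, hx₀, t₀, ht₀, hlt⟩ := hn1
    have hle : t₀ ≤ x₀ := by
      rcases hcomp x₀ hx₀ t₀ ht₀ with h | h
      · exact (h.lt_or_eq.resolve_left hlt).ge
      · exact h
    obtain ⟨C₀, hC₀, ht₀C₀⟩ := hcover t₀ ht₀
    obtain ⟨τ, hτG, hτT, hτC⟩ := htrans C₀ hC₀ C hCmem
    have hmem : τ t₀ ∈ C := by
      rw [← hτC]
      exact Set.smul_mem_smul_set ht₀C₀
    have h2 : t₀ < τ t₀ := lt_of_le_of_lt hle (hd x₀ hx₀ _ hmem)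
    exact no_descent hmono (inv_mem hτG) (x := τ t₀) (by simpa using h2)
  · obtain ⟨x₀, hx₀, t₀, ht₀, hlt⟩ := hn2
    have hle : x₀ ≤ t₀ := by
      rcases hcomp x₀ hx₀ t₀ ht₀ with h | h
      · exact h
      · exact (h.lt_or_eq.resolve_left hlt).ge
    obtain ⟨C₀, hC₀, ht₀C₀⟩ := hcover t₀ ht₀
    obtain ⟨τ, hτG, hτT, hτC⟩ := htrans C₀ hC₀ C hCmem
    have hmem : τ t₀ ∈ C := by
      rw [← hτC]
      exact Set.smul_mem_smul_set ht₀C₀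
    have h2 : τ t₀ < t₀ := lt_of_lt_of_le (hd x₀ hx₀ _ hmem) hle
    exact no_descent hmono hτG h2

end Helpers

/-- Lemma `mutualoruppercontrol`: if `(S,B)` is a primitive pair on the orbit
`D`, `C` is a block on the orbit `E` with `C ▶^B S`, and `(C,T)` is a primitive
pair, then `T ▶^B S` or `S ▶^T C`. -/
theorem control_mutual_or_from_above [Fintype P]
    (G : Subgroup (Equiv.Perm P))
    (hmono : ∀ σ ∈ G, ∀ a b : P, a ≤ b → σ a ≤ σ b)
    (d e : P)
    (D : Set P) (hD : D = {y | ∃ σ ∈ G, σ d = y})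
    (E : Set P) (hE : E = {y | ∃ σ ∈ G, σ e = y})
    (S B : Set P) (hSB : S ⊆ B) (hBD : B ⊆ D)
    (hblockS : ∀ σ ∈ G, σ • S = S ∨ (σ • S) ∩ S = ∅)
    (hblockB : ∀ σ ∈ G, σ • B = B ∨ (σ • B) ∩ B = ∅)
    (hprimSB : PrimitivePair G S B)
    (C T : Set P) (hCT : C ⊆ T) (hTE : T ⊆ E)
    (hblockC : ∀ σ ∈ G, σ • C = C ∨ (σ • C) ∩ C = ∅)
    (hblockT : ∀ σ ∈ G, σ • T = T ∨ (σ • T) ∩ T = ∅)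
    (hprimCT : PrimitivePair G C T)
    (hcontrol : ControlsVia G C B S) :
    ControlsVia G T B S ∨ ControlsVia G S T C := by
  by_contra hcon
  push_neg at hcon
  obtain ⟨hnT, hnS⟩ := hcon
  have H1 : ∀ S₁ ∈ blocksIn G S B, ∀ S₂ ∈ blocksIn G S B, SameWeave G S₁ S₂ T := by
    intro S₁ h₁ S₂ h₂
    by_contra hc
    exact hnT ⟨S₁, h₁, S₂, h₂, hc⟩
  have H2 : ∀ C₁ ∈ blocksIn G C T, ∀ C₂ ∈ blocksIn G C T, SameWeave G C₁ C₂ S := by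
    intro C₁ h₁ C₂ h₂
    by_contra hc
    exact hnS ⟨C₁, h₁, C₂, h₂, hc⟩
  obtain ⟨S₁, hS₁, S₂, hS₂, hne⟩ := hcontrol
  -- C is nonempty
  obtain ⟨c₀, hc₀⟩ : C.Nonempty := by
    rcases C.eq_empty_or_nonempty with hCe | h
    · exfalso
      apply hne
      subst hCe
      have triv : ∀ X : Set P, MadeBy X (∅ : Set P) := fun X => Or.inl (by simp)
      have triv2 : ∀ X : Set P, Incomp X (∅ : Set P) :=
        fun X a _ b hb => absurd hb (Set.notMem_empty b)
      have triv3 : ∀ X : Set P, ¬ Woven X (∅ : Set P) := by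
        intro X h
        obtain ⟨⟨a, _, b, hb, _⟩, -⟩ := h
        exact absurd hb (Set.notMem_empty b)
      exact ⟨iff_of_true (triv _) (triv _), iff_of_true (triv2 _) (triv2 _),
        fun h => absurd h (triv3 _), fun h => absurd h (triv3 _)⟩
    · exact h
  -- S is nonempty
  obtain ⟨s₀, hs₀⟩ : S.Nonempty := by
    rcases S.eq_empty_or_nonempty with hSe | h
    · exfalso
      subst hSe
      obtain ⟨⟨σ₁, -, hσ₁⟩, -⟩ := hS₁
      obtain ⟨⟨σ₂, -, hσ₂⟩, -⟩ := hS₂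
      rw [Set.smul_set_empty] at hσ₁ hσ₂
      apply hne
      rw [← hσ₁, ← hσ₂]
      exact sameWeave_refl G ∅ C
    · exact h
  have hSmem : S ∈ blocksIn G S B := ⟨⟨1, one_mem G, one_smul _ _⟩, hSB⟩
  have hCmem : C ∈ blocksIn G C T := ⟨⟨1, one_mem G, one_smul _ _⟩, hCT⟩
  obtain ⟨-, -, hCTtrans, -⟩ := hprimCT
  have hcov := cover_lemma hE hCT hTE hblockT ⟨c₀, hc₀⟩
  have K : ∀ S' ∈ blocksIn G S B, SameWeave G S S' C := by
    intro S' hS'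
    have hH1 := H1 S hSmem S' hS'
    have hS'ne : S'.Nonempty := by
      obtain ⟨⟨ρ, -, hρS⟩, -⟩ := hS'
      rw [← hρS]
      exact (Set.Nonempty.smul_set ⟨s₀, hs₀⟩)
    have clause1 : MadeBy S C ↔ MadeBy S' C := by
      constructor
      · intro hm
        by_cases hic : ∃ x ∈ S, ∃ t ∈ T, ¬ Cmp x t
        · obtain ⟨x, hx, t, ht, hnc⟩ := hic
          have hw : Woven S T := by
            refine ⟨?_, ⟨x, hx, t, ht, hnc⟩⟩
            rcases hm with h | h
            · exact ⟨s₀, hs₀, c₀, hCT hc₀, Or.inl (h s₀ hs₀ c₀ hc₀).le⟩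
            · exact ⟨s₀, hs₀, c₀, hCT hc₀, Or.inr (h s₀ hs₀ c₀ hc₀).le⟩
          obtain ⟨Φ, hΦG, hΦS, hΦT⟩ := hH1.2.2.1 hw
          have hTinv : Φ⁻¹ • T = T := inv_smul_eq_iff.mpr hΦT.symm
          have hC₂ : Φ⁻¹ • C ∈ blocksIn G C T := smul_block (inv_mem hΦG) hTinv hCmem
          have h2 := (H2 C hCmem _ hC₂).1.mp (madeBy_symm hm)
          have h3 := (madeBy_smul_iff hmono hΦG).2 h2
          rw [smul_inv_smul, hΦS] at h3
          exact madeBy_symm h3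
        · push_neg at hic
          have hmT : MadeBy S T := madeBy_big hmono hCmem hcov hCTtrans hic hm
          exact madeBy_mono_right (hH1.1.mp hmT) hCT
      · intro hm
        by_cases hic : ∃ x ∈ S', ∃ t ∈ T, ¬ Cmp x t
        · obtain ⟨x, hx, t, ht, hnc⟩ := hic
          obtain ⟨s', hs'⟩ := hS'ne
          have hw : Woven S' T := by
            refine ⟨?_, ⟨x, hx, t, ht, hnc⟩⟩
            rcases hm with h | h
            · exact ⟨s', hs', c₀, hCT hc₀, Or.inl (h s' hs' c₀ hc₀).le⟩
            · exact ⟨s', hs', c₀, hCT hc₀, Or.inr (h s' hs' c₀ hc₀).le⟩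
          obtain ⟨Φ, hΦG, hΦS, hΦT⟩ := hH1.2.2.2 hw
          have h2 := (madeBy_smul_iff hmono hΦG).2 hm
          rw [hΦS] at h2
          have hΦC : Φ • C ∈ blocksIn G C T := smul_block hΦG hΦT hCmem
          exact madeBy_symm ((H2 _ hΦC C hCmem).1.mp (madeBy_symm h2))
        · push_neg at hic
          have hmT : MadeBy S' T := madeBy_big hmono hCmem hcov hCTtrans hic hm
          exact madeBy_mono_right (hH1.1.mpr hmT) hCT
    have clause2 : Incomp S C ↔ Incomp S' C := by
      constructor
      · intro hi
        by_cases hcp : ∃ x ∈ S, ∃ t ∈ T, Cmp x t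
        · obtain ⟨x, hx, t, ht, hc⟩ := hcp
          have hw : Woven S T :=
            ⟨⟨x, hx, t, ht, hc⟩, ⟨s₀, hs₀, c₀, hCT hc₀, hi s₀ hs₀ c₀ hc₀⟩⟩
          obtain ⟨Φ, hΦG, hΦS, hΦT⟩ := hH1.2.2.1 hw
          have hTinv : Φ⁻¹ • T = T := inv_smul_eq_iff.mpr hΦT.symm
          have hC₂ : Φ⁻¹ • C ∈ blocksIn G C T := smul_block (inv_mem hΦG) hTinv hCmem
          have h2 := (H2 C hCmem _ hC₂).2.1.mp (incomp_symm hi)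
          have h3 := (incomp_smul_iff hmono hΦG).2 h2
          rw [smul_inv_smul, hΦS] at h3
          exact incomp_symm h3
        · push_neg at hcp
          exact incomp_mono_right (hH1.2.1.mp hcp) hCT
      · intro hi
        by_cases hcp : ∃ x ∈ S', ∃ t ∈ T, Cmp x t
        · obtain ⟨x, hx, t, ht, hc⟩ := hcp
          obtain ⟨s', hs'⟩ := hS'ne
          have hw : Woven S' T :=
            ⟨⟨x, hx, t, ht, hc⟩, ⟨s', hs', c₀, hCT hc₀, hi s' hs' c₀ hc₀⟩⟩
          obtain ⟨Φ, hΦG, hΦS, hΦT⟩ := hH1.2.2.2 hw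
          have h2 := (incomp_smul_iff hmono hΦG).2 hi
          rw [hΦS] at h2
          have hΦC : Φ • C ∈ blocksIn G C T := smul_block hΦG hΦT hCmem
          exact incomp_symm ((H2 _ hΦC C hCmem).2.1.mp (incomp_symm h2))
        · push_neg at hcp
          exact incomp_mono_right (hH1.2.1.mpr hcp) hCT
    have clause3 : Woven S C → ∃ Φ ∈ G, Φ • S = S' ∧ Φ • C = C := by
      intro hw
      obtain ⟨⟨a, ha, b, hb, hab⟩, ⟨a', ha', b', hb', hab'⟩⟩ := hw
      have hwT : Woven S T := ⟨⟨a, ha, b, hCT hb, hab⟩, ⟨a', ha', b', hCT hb', hab'⟩⟩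
      obtain ⟨Φ, hΦG, hΦS, hΦT⟩ := hH1.2.2.1 hwT
      have hTinv : Φ⁻¹ • T = T := inv_smul_eq_iff.mpr hΦT.symm
      have hC₂ : Φ⁻¹ • C ∈ blocksIn G C T := smul_block (inv_mem hΦG) hTinv hCmem
      have hwCS : Woven C S :=
        woven_symm ⟨⟨a, ha, b, hb, hab⟩, ⟨a', ha', b', hb', hab'⟩⟩
      obtain ⟨Ψ, hΨG, hΨC, hΨS⟩ := (H2 C hCmem _ hC₂).2.2.1 hwCS
      refine ⟨Φ * Ψ, mul_mem hΦG hΨG, ?_, ?_⟩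
      · rw [mul_smul, hΨS, hΦS]
      · rw [mul_smul, hΨC, smul_inv_smul]
    have clause4 : Woven S' C → ∃ Φ ∈ G, Φ • S' = S ∧ Φ • C = C := by
      intro hw
      obtain ⟨⟨a, ha, b, hb, hab⟩, ⟨a', ha', b', hb', hab'⟩⟩ := hw
      have hwT : Woven S' T := ⟨⟨a, ha, b, hCT hb, hab⟩, ⟨a', ha', b', hCT hb', hab'⟩⟩
      obtain ⟨Φ, hΦG, hΦS, hΦT⟩ := hH1.2.2.2 hwT
      have hΦC : Φ • C ∈ blocksIn G C T := smul_block hΦG hΦT hCmem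
      have hwS : Woven (Φ • C) S := by
        have h2 := (woven_smul_iff hmono hΦG).2
          (⟨⟨a, ha, b, hb, hab⟩, ⟨a', ha', b', hb', hab'⟩⟩ : Woven S' C)
        rw [hΦS] at h2
        exact woven_symm h2
      obtain ⟨Ψ, hΨG, hΨC, hΨS⟩ := (H2 _ hΦC C hCmem).2.2.1 hwS
      refine ⟨Ψ * Φ, mul_mem hΨG hΦG, ?_, ?_⟩
      · rw [mul_smul, hΦS, hΨS]
      · rw [mul_smul, hΨC]
    exact ⟨clause1, clause2, clause3, clause4⟩
  exact hne (sameWeave_trans hmono (sameWeave_symm (K S₁ hS₁)) (K S₂ hS₂))
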